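/- arXiv:1307.2312 — 2 statements merged into one kernel-verified Lean document; each statement's English description precedes it below -/
import Mathlib

section
/- Let U be a nonempty finite set and λ a real number with 0 ≤ λ ≤ 1. Then the function assigning to each ordered pair (A, B) of subsets of U the value (1 − λ)^{|A \ B|} / (4 − λ)^{|U|} is nonnegative and sums to 1 over all pairs of subsets of U; i.e., it is a probability mass function on pairs of parent sets. -/
lemma transfer_prior_sum_aux {X : Type*} [DecidableEq X] (lam : ℝ) (U : Finset X) :
    ∑ A ∈ U.powerset, ∑ B ∈ U.powerset, (1 - lam) ^ (A \ B).card
      = (4 - lam) ^ U.card := by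
  classical
  induction U using Finset.induction_on with
  | empty => simp
  | @insert a U ha ih =>
    have hsum : ∀ f : Finset X → ℝ,
        ∑ B ∈ (insert a U).powerset, f B
          = ∑ B ∈ U.powerset, f B + ∑ B ∈ U.powerset, f (insert a B) := by
      intro f
      rw [Finset.powerset_insert, Finset.sum_union, Finset.sum_image]
      · intro x hx y hy hxy
        have hx' : a ∉ x := fun h => ha (Finset.mem_powerset.mp hx h)
        have hy' : a ∉ y := fun h => ha (Finset.mem_powerset.mp hy h)
        rw [← Finset.erase_insert hx', ← Finset.erase_insert hy', hxy]
      · rw [Finset.disjoint_left]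
        intro x hx hx'
        obtain ⟨y, hy, rfl⟩ := Finset.mem_image.mp hx'
        exact ha (Finset.mem_powerset.mp hx (Finset.mem_insert_self a y))
    rw [hsum]
    have key : ∀ A ∈ U.powerset,
        (∑ B ∈ (insert a U).powerset, (1 - lam) ^ (A \ B).card)
          = ∑ B ∈ U.powerset, 2 * (1 - lam) ^ (A \ B).card ∧
        (∑ B ∈ (insert a U).powerset, (1 - lam) ^ ((insert a A) \ B).card)
          = ∑ B ∈ U.powerset, (2 - lam) * (1 - lam) ^ (A \ B).card := by
      intro A hA
      have hAU : A ⊆ U := Finset.mem_powerset.mp hA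
      have haA : a ∉ A := fun h => ha (hAU h)
      constructor
      · rw [hsum, ← Finset.sum_add_distrib]
        apply Finset.sum_congr rfl
        intro B hB
        have haB : a ∉ B := fun h => ha (Finset.mem_powerset.mp hB h)
        have h1 : A \ insert a B = A \ B := by
          ext x; simp only [Finset.mem_sdiff, Finset.mem_insert]
          constructor
          · rintro ⟨hx, h⟩; exact ⟨hx, fun h' => h (Or.inr h')⟩
          · rintro ⟨hx, h⟩; exact ⟨hx, fun h' => h'.elim (fun e => haA (e ▸ hx)) h⟩
        rw [h1]; ring
      · rw [hsum, ← Finset.sum_add_distrib]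
        apply Finset.sum_congr rfl
        intro B hB
        have haB : a ∉ B := fun h => ha (Finset.mem_powerset.mp hB h)
        have h1 : insert a A \ B = insert a (A \ B) := by
          ext x; simp only [Finset.mem_sdiff, Finset.mem_insert]
          constructor
          · rintro ⟨hx | hx, h⟩
            · exact Or.inl hx
            · exact Or.inr ⟨hx, h⟩
          · rintro (rfl | ⟨hx, h⟩)
            · exact ⟨Or.inl rfl, haB⟩
            · exact ⟨Or.inr hx, h⟩
        have h2 : insert a A \ insert a B = A \ B := by
          ext x; simp only [Finset.mem_sdiff, Finset.mem_insert]
          constructor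
          · rintro ⟨hx | hx, h⟩
            · exact absurd (Or.inl hx) h
            · exact ⟨hx, fun h' => h (Or.inr h')⟩
          · rintro ⟨hx, h⟩
            exact ⟨Or.inr hx, fun h' => h'.elim (fun e => haA (e ▸ hx)) h⟩
        have h3 : a ∉ A \ B := fun h => haA (Finset.mem_sdiff.mp h).1
        rw [h1, h2, Finset.card_insert_of_notMem h3, pow_succ]
        ring
    have e1 : ∑ A ∈ U.powerset, ∑ B ∈ (insert a U).powerset, (1 - lam) ^ (A \ B).card
        = 2 * ∑ A ∈ U.powerset, ∑ B ∈ U.powerset, (1 - lam) ^ (A \ B).card := by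
      rw [Finset.mul_sum]
      refine Finset.sum_congr rfl fun A hA => ?_
      rw [(key A hA).1, Finset.mul_sum]
    have e2 : ∑ A ∈ U.powerset, ∑ B ∈ (insert a U).powerset, (1 - lam) ^ ((insert a A) \ B).card
        = (2 - lam) * ∑ A ∈ U.powerset, ∑ B ∈ U.powerset, (1 - lam) ^ (A \ B).card := by
      rw [Finset.mul_sum]
      refine Finset.sum_congr rfl fun A hA => ?_
      rw [(key A hA).2, Finset.mul_sum]
    rw [e1, e2, ih, Finset.card_insert_of_notMem ha, pow_succ]
    ring

/-- For a nonempty finite set `U` and `0 ≤ λ ≤ 1`, the geometric transfer prior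
`(A, B) ↦ (1 - λ)^{|A \ B|} / (4 - λ)^{|U|}` is nonnegative and sums to 1 over
all ordered pairs of subsets of `U`: it is a probability mass function. -/
theorem transfer_prior_is_pmf
    {X : Type*} [DecidableEq X] (U : Finset X) (hU : U.Nonempty)
    (lam : ℝ) (h0 : 0 ≤ lam) (h1 : lam ≤ 1) :
    (∀ A ∈ U.powerset, ∀ B ∈ U.powerset,
        0 ≤ (1 - lam) ^ (A \ B).card / (4 - lam) ^ U.card) ∧
    ∑ A ∈ U.powerset, ∑ B ∈ U.powerset,
        (1 - lam) ^ (A \ B).card / (4 - lam) ^ U.card = 1 := by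
  have h4 : (0:ℝ) < 4 - lam := by linarith
  constructor
  · intro A _ B _
    exact div_nonneg (pow_nonneg (by linarith) _) (pow_nonneg h4.le _)
  · have : ∑ A ∈ U.powerset, ∑ B ∈ U.powerset,
        (1 - lam) ^ (A \ B).card / (4 - lam) ^ U.card
        = (∑ A ∈ U.powerset, ∑ B ∈ U.powerset, (1 - lam) ^ (A \ B).card)
            / (4 - lam) ^ U.card := by
      rw [Finset.sum_div]
      exact Finset.sum_congr rfl fun A _ => by rw [Finset.sum_div]
    rw [this, transfer_prior_sum_aux, div_self (pow_ne_zero _ h4.ne')]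
end

section
/- Let U be a nonempty finite set. Then ∑_{A ⊆ U} ∑_{B ⊆ U} ∫_0^1 (1 − λ)^{|A \ B|} / (4 − λ)^{|U|} dλ = 1; that is, the Bayesian-model-averaged transfer prior is a proper probability distribution over ordered pairs of subsets of U. -/
lemma bma_key {X : Type*} [DecidableEq X] (t : ℝ) (U : Finset X) :
    ∑ A ∈ U.powerset, ∑ B ∈ U.powerset, t ^ (A \ B).card = (t + 3) ^ U.card := by
  induction U using Finset.induction_on with
  | empty => simp
  | @insert a s ha ih =>

    rw [Finset.sum_powerset_insert ha]
    have hinner : ∀ A ∈ s.powerset,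
        ∑ B ∈ (insert a s).powerset, t ^ (A \ B).card
          = ∑ B ∈ s.powerset, t ^ (A \ B).card
            + ∑ B ∈ s.powerset, t ^ (A \ B).card := by
      intro A hA
      rw [Finset.mem_powerset] at hA
      have haA : a ∉ A := fun h => ha (hA h)
      rw [Finset.sum_powerset_insert ha]
      congr 1
      refine Finset.sum_congr rfl fun B hB => ?_
      congr 2
      ext x
      simp only [Finset.mem_sdiff, Finset.mem_insert]
      constructor
      · rintro ⟨hx, h2⟩; exact ⟨hx, fun h => h2 (Or.inr h)⟩
      · rintro ⟨hx, h2⟩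
        exact ⟨hx, fun h => h.elim (fun h => haA (h ▸ hx)) h2⟩
    have hinner2 : ∀ A ∈ s.powerset,
        ∑ B ∈ (insert a s).powerset, t ^ (insert a A \ B).card
          = t * ∑ B ∈ s.powerset, t ^ (A \ B).card
            + ∑ B ∈ s.powerset, t ^ (A \ B).card := by
      intro A hA
      rw [Finset.mem_powerset] at hA
      have haA : a ∉ A := fun h => ha (hA h)
      rw [Finset.sum_powerset_insert ha, Finset.mul_sum]
      congr 1
      · refine Finset.sum_congr rfl fun B hB => ?_
        rw [Finset.mem_powerset] at hB
        have haB : a ∉ B := fun h => ha (hB h)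
        have : insert a A \ B = insert a (A \ B) := by
          ext x
          simp only [Finset.mem_sdiff, Finset.mem_insert]
          constructor
          · rintro ⟨hx | hx, h2⟩
            · exact Or.inl hx
            · exact Or.inr ⟨hx, h2⟩
          · rintro (hx | ⟨hx, h2⟩)
            · exact ⟨Or.inl hx, hx ▸ haB⟩
            · exact ⟨Or.inr hx, h2⟩
        rw [this, Finset.card_insert_of_notMem (fun h => haA (Finset.mem_sdiff.mp h).1),
          pow_succ, mul_comm]
      · refine Finset.sum_congr rfl fun B hB => ?_
        have : insert a A \ insert a B = A \ B := by
          ext x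
          simp only [Finset.mem_sdiff, Finset.mem_insert, not_or]
          constructor
          · rintro ⟨hx | hx, h1, h2⟩
            · exact absurd hx h1
            · exact ⟨hx, h2⟩
          · rintro ⟨hx, h2⟩
            exact ⟨Or.inr hx, fun h => haA (h ▸ hx), h2⟩
        rw [this]
    rw [Finset.sum_congr rfl hinner, Finset.sum_congr rfl hinner2,
      Finset.sum_add_distrib, Finset.sum_add_distrib, ← Finset.mul_sum, ih,
      Finset.card_insert_of_notMem ha, pow_succ]
    ring

set_option maxHeartbeats 1000000 in
/-- The Bayesian-model-averaged transfer prior is a proper probability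
distribution over ordered pairs of subsets of a nonempty finite set `U`:
`∑_{A ⊆ U} ∑_{B ⊆ U} ∫_0^1 (1 - λ)^{|A \ B|} / (4 - λ)^{|U|} dλ = 1`. -/
theorem bma_transfer_prior_sums_to_one
    {X : Type*} [DecidableEq X] (U : Finset X) (hU : U.Nonempty) :
    ∑ A ∈ U.powerset, ∑ B ∈ U.powerset,
        ∫ lam in (0:ℝ)..1, (1 - lam) ^ (A \ B).card / (4 - lam) ^ U.card = 1 := by
  have hden : ∀ x ∈ Set.uIcc (0:ℝ) 1, (4 - x) ^ U.card ≠ 0 := by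
    intro x hx
    rw [Set.uIcc_of_le (by norm_num)] at hx
    have : (0:ℝ) < 4 - x := by linarith [hx.2]
    positivity
  have hint : ∀ (c : ℕ), IntervalIntegrable
      (fun lam : ℝ => (1 - lam) ^ c / (4 - lam) ^ U.card)
      MeasureTheory.volume 0 1 := by
    intro c
    apply ContinuousOn.intervalIntegrable
    exact ((continuous_const.sub continuous_id).pow c).continuousOn.div
      (((continuous_const.sub continuous_id).pow U.card).continuousOn) hden
  have h1 : ∀ A ∈ U.powerset,
      ∑ B ∈ U.powerset, ∫ lam in (0:ℝ)..1, (1 - lam) ^ (A \ B).card / (4 - lam) ^ U.card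
        = ∫ lam in (0:ℝ)..1, ∑ B ∈ U.powerset, (1 - lam) ^ (A \ B).card / (4 - lam) ^ U.card := by
    intro A _
    exact (intervalIntegral.integral_finset_sum (fun B _ => hint _)).symm
  have h2 := intervalIntegral.integral_finset_sum (μ := MeasureTheory.volume)
    (a := (0:ℝ)) (b := 1) (s := U.powerset)
    (f := fun A lam => ∑ B ∈ U.powerset, (1 - lam) ^ (A \ B).card / (4 - lam) ^ U.card)
    (fun A _ => (continuousOn_finset_sum _ (fun B _ =>
      ((continuous_const.sub continuous_id).pow _).continuousOn.div
        ((continuous_const.sub continuous_id).pow U.card).continuousOn hden)).intervalIntegrable)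
  rw [Finset.sum_congr rfl h1, ← h2]
  have heq : ∀ lam ∈ Set.uIcc (0:ℝ) 1,
      (∑ A ∈ U.powerset, ∑ B ∈ U.powerset,
        (1 - lam) ^ (A \ B).card / (4 - lam) ^ U.card) = 1 := by
    intro lam hlam
    have := bma_key (1 - lam) U
    have h4 : ((1:ℝ) - lam) + 3 = 4 - lam := by ring
    rw [h4] at this
    simp only [div_eq_mul_inv, ← Finset.sum_mul, this]
    exact mul_inv_cancel₀ (hden lam hlam)
  rw [intervalIntegral.integral_congr heq]
  simp
end
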